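/- For z ∈ ℂ with sin(5z) ≠ 0 and sin(z - kπ/5) ≠ 0 for k = 1,2,3,4: Σ_{k=1}^{4} χ₅(k) cot(z - kπ/5) = -4√5 · (sin z · sin 2z)/sin 5z, where χ₅(k) = (k/5) is the Legendre symbol. -/

import Mathlib

set_option maxHeartbeats 2000000

open Finset Real Complex

/-- The Legendre symbol mod 5. -/
noncomputable def chi5 (n : ℤ) : ℂ :=
  if n % 5 = 1 ∨ n % 5 = 4 then 1
  else if n % 5 = 2 ∨ n % 5 = 3 then -1
  else 0

theorem stmt_19 (z : ℂ)
    (hz : ∀ k : ℤ, 1 ≤ k → k ≤ 4 → Complex.sin (z - k * Real.pi / 5) ≠ 0)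
    (hs : Complex.sin (5 * z) ≠ 0) :
    (∑ k ∈ Finset.Ico 1 5, chi5 (k : ℤ) *
        (Complex.cos (z - k * Real.pi / 5) / Complex.sin (z - k * Real.pi / 5))) =
      -4 * (Real.sqrt 5 : ℂ) * (Complex.sin z * Complex.sin (2 * z)) /
        Complex.sin (5 * z) := by
  set b := Complex.exp ((↑Real.pi / 5) * Complex.I) with hbdef
  set u := Complex.exp (z * Complex.I) with hudef
  have hb : b ≠ 0 := Complex.exp_ne_zero _
  have hu : u ≠ 0 := Complex.exp_ne_zero _
  have hexp : ∀ k : ℕ, Complex.exp ((z - (k:ℂ) * ↑Real.pi / 5) * Complex.I) = u / b ^ k := by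
    intro k
    rw [← Complex.exp_nat_mul, ← Complex.exp_sub]
    congr 1
    ring
  have hexp' : ∀ k : ℕ, Complex.exp (-((z - (k:ℂ) * ↑Real.pi / 5) * Complex.I)) = b ^ k / u := by
    intro k
    rw [← Complex.exp_nat_mul, ← Complex.exp_sub]
    congr 1
    ring
  have hsin : ∀ k : ℕ, Complex.sin (z - (k:ℂ) * ↑Real.pi / 5)
      = -Complex.I * (u ^ 2 - b ^ (2 * k)) / (2 * u * b ^ k) := by
    intro k
    rw [Complex.sin, neg_mul, hexp k, hexp' k]
    field_simp
    ring
  have hcos : ∀ k : ℕ, Complex.cos (z - (k:ℂ) * ↑Real.pi / 5)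
      = (u ^ 2 + b ^ (2 * k)) / (2 * u * b ^ k) := by
    intro k
    rw [Complex.cos, neg_mul, hexp k, hexp' k]
    field_simp
    ring
  have hez : ∀ n : ℕ, Complex.exp ((n : ℂ) * z * Complex.I) = u ^ n := by
    intro n
    rw [hudef, ← Complex.exp_nat_mul]
    congr 1
    ring
  have hez' : ∀ n : ℕ, Complex.exp (-((n : ℂ) * z * Complex.I)) = (u ^ n)⁻¹ := by
    intro n
    rw [← Complex.exp_nat_mul (z * Complex.I) n, ← Complex.exp_neg]
    congr 1
    ring
  have hsz : Complex.sin z = -Complex.I * (u ^ 2 - 1) / (2 * u) := by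
    rw [Complex.sin, neg_mul]
    have h2 := hez' 1
    norm_num at h2
    rw [h2, ← hudef]
    field_simp
    ring
  have hs2z : Complex.sin (2 * z) = -Complex.I * (u ^ 4 - 1) / (2 * u ^ 2) := by
    rw [Complex.sin, neg_mul]
    have h1 := hez 2
    have h2 := hez' 2
    push_cast at h1 h2
    rw [show (2 * z * Complex.I) = 2 * z * Complex.I by ring] at h1
    rw [h1, h2]
    field_simp
    ring
  have hs5z : Complex.sin (5 * z) = -Complex.I * (u ^ 10 - 1) / (2 * u ^ 5) := by
    rw [Complex.sin, neg_mul]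
    have h1 := hez 5
    have h2 := hez' 5
    push_cast at h1 h2
    rw [h1, h2]
    field_simp
    ring
  have h10 : u ^ 10 - 1 ≠ 0 := by
    intro h
    apply hs
    rw [hs5z, h]
    simp
  have hkey : ∀ k : ℕ, 1 ≤ k → k ≤ 4 → u ^ 2 - b ^ (2 * k) ≠ 0 := by
    intro k h1 h4 h
    apply hz k (by exact_mod_cast h1) (by exact_mod_cast h4)
    have hc : ((k : ℤ) : ℂ) = (k : ℂ) := by push_cast; ring
    rw [hc, hsin k, h]
    simp
  have n1 := hkey 1 (by norm_num) (by norm_num)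
  have n2 := hkey 2 (by norm_num) (by norm_num)
  have n3 := hkey 3 (by norm_num) (by norm_num)
  have n4 := hkey 4 (by norm_num) (by norm_num)
  norm_num at n1 n2 n3 n4
  -- sqrt 5
  have hcos5 : Complex.cos ((↑Real.pi / 5 : ℂ)) = ((1 + Real.sqrt 5) / 4 : ℝ) := by
    rw [show ((↑Real.pi / 5 : ℂ)) = ((Real.pi / 5 : ℝ) : ℂ) by push_cast; ring,
      ← Complex.ofReal_cos, Real.cos_pi_div_five]
  have h5 : (Real.sqrt 5 : ℂ) = 2 * b + 2 * b⁻¹ - 1 := by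
    have hc : Complex.cos ((↑Real.pi / 5 : ℂ)) = (b + b⁻¹) / 2 := by
      rw [Complex.cos, show (-(↑Real.pi / 5) * Complex.I) = -(↑Real.pi / 5 * Complex.I) by ring,
        Complex.exp_neg, ← hbdef]
    rw [hcos5] at hc
    push_cast at hc
    linear_combination 4 * hc
  have hsq5 : ((Real.sqrt 5 : ℂ)) ^ 2 = 5 := by
    rw [← Complex.ofReal_pow, Real.sq_sqrt (by norm_num : (5:ℝ) ≥ 0)]
    norm_num
  have hbinv : b * b⁻¹ = 1 := mul_inv_cancel₀ hb
  have hrel : b ^ 4 - b ^ 3 + b ^ 2 - b + 1 = 0 := by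
    have h2 : (2 * b + 2 * b⁻¹ - 1) ^ 2 = 5 := by rw [← h5]; exact hsq5
    have h3 : b⁻¹ = b⁻¹ := rfl
    field_simp at h2
    linear_combination h2 / 4
  have c1 : chi5 1 = 1 := by norm_num [chi5]
  have c2 : chi5 2 = -1 := by norm_num [chi5]
  have c3 : chi5 3 = -1 := by norm_num [chi5]
  have c4 : chi5 4 = 1 := by norm_num [chi5]
  have e1 := hsin 1; have e2 := hsin 2; have e3 := hsin 3; have e4 := hsin 4
  have f1 := hcos 1; have f2 := hcos 2; have f3 := hcos 3; have f4 := hcos 4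
  norm_num at e1 e2 e3 e4 f1 f2 f3 f4
  have hset : Finset.Ico (1:ℤ) 5 = {1, 2, 3, 4} := by
    ext x
    simp only [Finset.mem_Ico, Finset.mem_insert, Finset.mem_singleton]
    omega
  rw [hset, Finset.sum_insert (by norm_num),
    Finset.sum_insert (by norm_num), Finset.sum_insert (by norm_num), Finset.sum_singleton,
    c1, c2, c3, c4]
  norm_num
  rw [e1, e2, e3, e4, f1, f2, f3, f4, hsz, hs2z, hs5z, h5]
  field_simp
  linear_combination (-((8 * u ^ 16 * b ^ 2) + (-4 * u ^ 16 * b ^ 1) + (8 * u ^ 16) + (-8 * u ^ 14 * b ^ 10) + (4 * u ^ 14 * b ^ 9) + (-16 * u ^ 14 * b ^ 8) + (4 * u ^ 14 * b ^ 7) + (-16 * u ^ 14 * b ^ 6) + (4 * u ^ 14 * b ^ 5) + (-16 * u ^ 14 * b ^ 4) + (4 * u ^ 14 * b ^ 3) + (-16 * u ^ 14 * b ^ 2) + (4 * u ^ 14 * b ^ 1) + (-8 * u ^ 14) + (8 * u ^ 12 * b ^ 16) + (-4 * u ^ 12 * b ^ 15) + (16 * u ^ 12 * b ^ 14) + (-4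 * u ^ 12 * b ^ 13) + (24 * u ^ 12 * b ^ 12) + (-8 * u ^ 12 * b ^ 11) + (32 * u ^ 12 * b ^ 10) + (-8 * u ^ 12 * b ^ 9) + (32 * u ^ 12 * b ^ 8) + (-8 * u ^ 12 * b ^ 7) + (24 * u ^ 12 * b ^ 6) + (-4 * u ^ 12 * b ^ 5) + (16 * u ^ 12 * b ^ 4) + (-4 * u ^ 12 * b ^ 3) + (4 * u ^ 12 * b ^ 1) + (-8 * u ^ 12) + (-8 * u ^ 10 * b ^ 20) + (4 * u ^ 10 * b ^ 19) + (-16 * u ^ 10 * b ^ 18) + (4 * u ^ 10 * b ^ 17) + (-24 * u ^ 10 * b ^ 16) + (8 * u ^ 10 * b ^ 15) + (-32 * u ^ 10 * b ^ 14) + (8 * u ^ 10 * b ^ 13) + (-32 * u ^ 10 * b ^ 12) + (8 * u ^ 10 * b ^ 11) + (-16 * u ^ 10 * b ^ 10) + (8 * u ^ 10 * b ^ 6) + (-4 * u ^ 10 * b ^ 5) + (16 * u ^ 10 * b ^ 4) + (-4 * u ^ 10 * b ^ 3) + (16 * u ^ 10 * b ^ 2) + (-4 * u ^ 10 * b ^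 1) + (8 * u ^ 10) + (8 * u ^ 8 * b ^ 22) + (-4 * u ^ 8 * b ^ 21) + (16 * u ^ 8 * b ^ 20) + (-4 * u ^ 8 * b ^ 19) + (16 * u ^ 8 * b ^ 18) + (-4 * u ^ 8 * b ^ 17) + (8 * u ^ 8 * b ^ 16) + (-16 * u ^ 8 * b ^ 12) + (8 * u ^ 8 * b ^ 11) + (-32 * u ^ 8 * b ^ 10) + (8 * u ^ 8 * b ^ 9) + (-32 * u ^ 8 * b ^ 8) + (8 * u ^ 8 * b ^ 7) + (-24 * u ^ 8 * b ^ 6) + (4 * u ^ 8 * b ^ 5) + (-16 * u ^ 8 * b ^ 4) + (4 * u ^ 8 * b ^ 3) + (-8 * u ^ 8 * b ^ 2) + (-8 * u ^ 6 * b ^ 22) + (4 * u ^ 6 * b ^ 21) + (-4 * u ^ 6 * b ^ 19) + (16 * u ^ 6 * b ^ 18) + (-4 * u ^ 6 * b ^ 17) + (24 * u ^ 6 * b ^ 16) + (-8 * u ^ 6 * b ^ 15) + (32 * u ^ 6 * b ^ 14) + (-8 * u ^ 6 * b ^ 13) + (32 * u ^ 6 * b ^ 12) + (-8 * u ^ 6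 * b ^ 11) + (24 * u ^ 6 * b ^ 10) + (-4 * u ^ 6 * b ^ 9) + (16 * u ^ 6 * b ^ 8) + (-4 * u ^ 6 * b ^ 7) + (8 * u ^ 6 * b ^ 6) + (-8 * u ^ 4 * b ^ 22) + (4 * u ^ 4 * b ^ 21) + (-16 * u ^ 4 * b ^ 20) + (4 * u ^ 4 * b ^ 19) + (-16 * u ^ 4 * b ^ 18) + (4 * u ^ 4 * b ^ 17) + (-16 * u ^ 4 * b ^ 16) + (4 * u ^ 4 * b ^ 15) + (-16 * u ^ 4 * b ^ 14) + (4 * u ^ 4 * b ^ 13) + (-8 * u ^ 4 * b ^ 12) + (8 * u ^ 2 * b ^ 22) + (-4 * u ^ 2 * b ^ 21) + (8 * u ^ 2 * b ^ 20))) * Complex.I_sq + ((-4 * u ^ 16 * b ^ 5) + (-4 * u ^ 16 * b ^ 4) + (4 * u ^ 16 * b ^ 3) + (4 * u ^ 16 * b ^ 2) + (4 * u ^ 16 * b ^ 1) + (8 * u ^ 16) + (-8 * u ^ 14 * b ^ 6) + (-4 * u ^ 14 * b ^ 5) + (-12 * u ^ 14 * b ^ 4) + (-12 * u ^ 14 *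 b ^ 3) + (-12 * u ^ 14 * b ^ 2) + (-4 * u ^ 14 * b ^ 1) + (-8 * u ^ 14) + (4 * u ^ 12 * b ^ 15) + (4 * u ^ 12 * b ^ 14) + (-4 * u ^ 12 * b ^ 13) + (4 * u ^ 12 * b ^ 12) + (4 * u ^ 12 * b ^ 10) + (12 * u ^ 12 * b ^ 9) + (28 * u ^ 12 * b ^ 8) + (12 * u ^ 12 * b ^ 7) + (24 * u ^ 12 * b ^ 6) + (20 * u ^ 12 * b ^ 5) + (12 * u ^ 12 * b ^ 4) + (-4 * u ^ 12 * b ^ 3) + (4 * u ^ 12 * b ^ 2) + (-4 * u ^ 12 * b ^ 1) + (-8 * u ^ 12) + (-8 * u ^ 10 * b ^ 16) + (-4 * u ^ 10 * b ^ 15) + (-12 * u ^ 10 * b ^ 14) + (-12 * u ^ 10 * b ^ 13) + (-20 * u ^ 10 * b ^ 12) + (-8 * u ^ 10 * b ^ 11) + (-20 * u ^ 10 * b ^ 10) + (-12 * u ^ 10 * b ^ 9) + (-12 * u ^ 10 * b ^ 8) + (-4 * u ^ 10 * b ^ 7) + (4 * u ^ 10 * b ^ 5) + (12 * u ^ 10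 * b ^ 4) + (12 * u ^ 10 * b ^ 3) + (12 * u ^ 10 * b ^ 2) + (4 * u ^ 10 * b ^ 1) + (8 * u ^ 10) + (8 * u ^ 8 * b ^ 18) + (4 * u ^ 8 * b ^ 17) + (12 * u ^ 8 * b ^ 16) + (12 * u ^ 8 * b ^ 15) + (12 * u ^ 8 * b ^ 14) + (4 * u ^ 8 * b ^ 13) + (-4 * u ^ 8 * b ^ 11) + (-12 * u ^ 8 * b ^ 10) + (-12 * u ^ 8 * b ^ 9) + (-20 * u ^ 8 * b ^ 8) + (-8 * u ^ 8 * b ^ 7) + (-20 * u ^ 8 * b ^ 6) + (-12 * u ^ 8 * b ^ 5) + (-12 * u ^ 8 * b ^ 4) + (-4 * u ^ 8 * b ^ 3) + (-8 * u ^ 8 * b ^ 2) + (-8 * u ^ 6 * b ^ 18) + (-4 * u ^ 6 * b ^ 17) + (4 * u ^ 6 * b ^ 16) + (-4 * u ^ 6 * b ^ 15) + (12 * u ^ 6 * b ^ 14) + (20 * u ^ 6 * b ^ 13) + (24 * u ^ 6 * b ^ 12) + (12 * u ^ 6 * b ^ 11) + (28 * u ^ 6 * b ^ 10) + (12 * u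 ^ 6 * b ^ 9) + (4 * u ^ 6 * b ^ 8) + (4 * u ^ 6 * b ^ 6) + (-4 * u ^ 6 * b ^ 5) + (4 * u ^ 6 * b ^ 4) + (4 * u ^ 6 * b ^ 3) + (-8 * u ^ 4 * b ^ 18) + (-4 * u ^ 4 * b ^ 17) + (-12 * u ^ 4 * b ^ 16) + (-12 * u ^ 4 * b ^ 15) + (-12 * u ^ 4 * b ^ 14) + (-4 * u ^ 4 * b ^ 13) + (-8 * u ^ 4 * b ^ 12) + (8 * u ^ 2 * b ^ 18) + (4 * u ^ 2 * b ^ 17) + (4 * u ^ 2 * b ^ 16) + (4 * u ^ 2 * b ^ 15) + (-4 * u ^ 2 * b ^ 14) + (-4 * u ^ 2 * b ^ 13)) * hrel
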